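/- Let X be an n×n positive semidefinite real matrix, C an m×n real matrix, and R an m×m positive definite real matrix. Then g̃(X) = X − X Cᵀ (C X Cᵀ + R)⁻¹ C X is positive semidefinite. -/

import Mathlib

open Matrix

lemma fromBlocks_diag_posSemidef {n m : ℕ} {A : Matrix (Fin n) (Fin n) ℝ}
    {D : Matrix (Fin m) (Fin m) ℝ} (hA : A.PosSemidef) (hD : D.PosSemidef) :
    (fromBlocks A 0 0 D).PosSemidef := by
  rw [posSemidef_iff_dotProduct_mulVec]
  constructor
  · unfold Matrix.IsHermitian
    rw [fromBlocks_conjTranspose, hA.1.eq, hD.1.eq]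
    simp
  · intro x
    have hx : x = Sum.elim (x ∘ Sum.inl) (x ∘ Sum.inr) := by
      ext (i | i) <;> rfl
    rw [hx, fromBlocks_mulVec]
    simp only [Matrix.zero_mulVec, add_zero, zero_add, Function.star_sumElim, Sum.elim_comp_inl, Sum.elim_comp_inr,
      sumElim_dotProduct_sumElim]
    exact add_nonneg (hA.dotProduct_mulVec_nonneg _) (hD.dotProduct_mulVec_nonneg _)

/-- For `X` positive semidefinite, `C` an `m × n` matrix and `R` positive
definite, the Riccati update `g̃(X) = X - X Cᵀ (C X Cᵀ + R)⁻¹ C X` is positive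
semidefinite. -/
theorem riccati_update_posSemidef {n m : ℕ}
    (X : Matrix (Fin n) (Fin n) ℝ) (hX : X.PosSemidef)
    (C : Matrix (Fin m) (Fin n) ℝ)
    (R : Matrix (Fin m) (Fin m) ℝ) (hR : R.PosDef) :
    (X - X * Cᵀ * (C * X * Cᵀ + R)⁻¹ * (C * X)).PosSemidef := by
  have h1 : (C * X * Cᵀ).PosSemidef := by
    simpa using hX.mul_mul_conjTranspose_same C
  have hS : (C * X * Cᵀ + R).PosDef := Matrix.PosDef.posSemidef_add h1 hR
  haveI := hS.isUnit.invertible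
  have hB : (X * Cᵀ)ᴴ = C * X := by
    rw [conjTranspose_mul]
    rw [← conjTranspose_eq_transpose_of_trivial, hX.1.eq]
    simp
  have key : (fromBlocks X (X * Cᵀ) ((X * Cᵀ)ᴴ) (C * X * Cᵀ + R)).PosSemidef := by
    rw [hB]
    have h2 := (fromBlocks_diag_posSemidef hX
      (Matrix.PosSemidef.zero (n := Fin m))).mul_mul_conjTranspose_same
      (fromBlocks (1 : Matrix (Fin n) (Fin n) ℝ) 0 C 0 : Matrix (Fin n ⊕ Fin m) (Fin n ⊕ Fin m) ℝ)
    have h3 := fromBlocks_diag_posSemidef (Matrix.PosSemidef.zero (n := Fin n)) hR.posSemidef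
    have h4 := h2.add h3
    have heq : fromBlocks (1 : Matrix (Fin n) (Fin n) ℝ) 0 C 0 * fromBlocks X 0 0 0 *
        (fromBlocks (1 : Matrix (Fin n) (Fin n) ℝ) 0 C 0)ᴴ + fromBlocks 0 0 0 R =
        fromBlocks X (X * Cᵀ) (C * X) (C * X * Cᵀ + R) := by
      rw [fromBlocks_conjTranspose]
      simp [fromBlocks_multiply, fromBlocks_add, Matrix.mul_assoc]
    rwa [heq] at h4
  have := (PosDef.fromBlocks₂₂ X (X * Cᵀ) hS).mp key
  rwa [hB] at this
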